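/- Let σ > 0, α ∈ ℝ, d a positive natural number, and m, m' ∈ ℝ^d. Let p_c(x) = (1/(σ√(2π)))·exp(−(x−c)²/(2σ²)) denote the density of the one-dimensional Gaussian N(c, σ²). Then ∫_{ℝ^d} ∏_{j=1}^d p_{m_j}(x_j)^α · p_{m'_j}(x_j)^{1−α} dx = exp( α(α−1)·‖m − m'‖₂² / (2σ²) ). In particular, for α > 1 the Rényi divergence of order α between the product Gaussians N(m, σ²I) and N(m', σ²I) equals α‖m−m'‖₂²/(2σ²), so a composition of J independent Gaussian mechanisms of ℓ₂ sensitivity 1 and noise variance σ² satisfies (α, αJ/(2σ²))-Rényi differential privacy. -/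

import Mathlib

open Real MeasureTheory

noncomputable def gaussPdf (σ c x : ℝ) : ℝ :=
  (1 / (σ * Real.sqrt (2 * Real.pi))) * Real.exp (-(x - c) ^ 2 / (2 * σ ^ 2))

lemma gaussPdf_eq (σ c : ℝ) (hσ : 0 < σ) :
    gaussPdf σ c = ProbabilityTheory.gaussianPDFReal c ⟨σ ^ 2, sq_nonneg σ⟩ := by
  ext x
  rw [gaussPdf]
  unfold ProbabilityTheory.gaussianPDFReal
  congr 1
  rw [one_div]
  congr 1
  push_cast
  change σ * √(2 * π) = √(2 * π * σ ^ 2)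
  rw [show 2 * Real.pi * σ ^ 2 = σ ^ 2 * (2 * Real.pi) by ring,
    Real.sqrt_mul (sq_nonneg σ), Real.sqrt_sq hσ.le]

lemma integral_gaussPdf (σ c : ℝ) (hσ : 0 < σ) : ∫ x, gaussPdf σ c x = 1 := by
  rw [show (fun x => gaussPdf σ c x) = gaussPdf σ c from rfl, gaussPdf_eq σ c hσ]
  exact ProbabilityTheory.integral_gaussianPDFReal_eq_one c
    (by intro h; have h2 := congrArg (fun v : NNReal => (v : ℝ)) h; simp only [NNReal.coe_zero] at h2; change σ ^ 2 = 0 at h2; exact absurd h2 (by positivity))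

lemma gaussPdf_pos (σ c x : ℝ) (hσ : 0 < σ) : 0 < gaussPdf σ c x := by
  have := Real.sqrt_pos.mpr (by positivity : (0:ℝ) < 2 * Real.pi)
  rw [gaussPdf]; positivity

lemma key (σ α c c' x : ℝ) (hσ : 0 < σ) :
    gaussPdf σ c x ^ α * gaussPdf σ c' x ^ (1 - α)
      = Real.exp (α * (α - 1) * (c - c') ^ 2 / (2 * σ ^ 2)) *
        gaussPdf σ (α * c + (1 - α) * c') x := by
  have hA : 0 < 1 / (σ * Real.sqrt (2 * Real.pi)) := by
    have := Real.sqrt_pos.mpr (by positivity : (0:ℝ) < 2 * Real.pi)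
    positivity
  rw [gaussPdf, gaussPdf, gaussPdf,
    Real.mul_rpow hA.le (Real.exp_nonneg _), Real.mul_rpow hA.le (Real.exp_nonneg _),
    ← Real.exp_mul, ← Real.exp_mul]
  rw [show (1 / (σ * Real.sqrt (2 * Real.pi))) ^ α *
        Real.exp (-(x - c) ^ 2 / (2 * σ ^ 2) * α) *
        ((1 / (σ * Real.sqrt (2 * Real.pi))) ^ (1 - α) *
          Real.exp (-(x - c') ^ 2 / (2 * σ ^ 2) * (1 - α)))
      = ((1 / (σ * Real.sqrt (2 * Real.pi))) ^ α *
          (1 / (σ * Real.sqrt (2 * Real.pi))) ^ (1 - α)) *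
        (Real.exp (-(x - c) ^ 2 / (2 * σ ^ 2) * α) *
          Real.exp (-(x - c') ^ 2 / (2 * σ ^ 2) * (1 - α))) by ring,
    ← Real.rpow_add hA, ← Real.exp_add]
  have hσ2 : (2 * σ ^ 2) ≠ 0 := by positivity
  rw [show α + (1 - α) = 1 by ring, Real.rpow_one]
  rw [show -(x - c) ^ 2 / (2 * σ ^ 2) * α + -(x - c') ^ 2 / (2 * σ ^ 2) * (1 - α)
      = α * (α - 1) * (c - c') ^ 2 / (2 * σ ^ 2) +
        -(x - (α * c + (1 - α) * c')) ^ 2 / (2 * σ ^ 2) by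
    field_simp; ring, Real.exp_add]
  ring

lemma key_int (σ α c c' : ℝ) (hσ : 0 < σ) :
    ∫ x, gaussPdf σ c x ^ α * gaussPdf σ c' x ^ (1 - α)
      = Real.exp (α * (α - 1) * (c - c') ^ 2 / (2 * σ ^ 2)) := by
  simp_rw [key σ α c c' _ hσ]
  rw [integral_const_mul, integral_gaussPdf _ _ hσ, mul_one]

/-- Rényi divergence between product (spherical) Gaussians `N(m, σ²I)` and `N(m', σ²I)`:
`∫_{ℝ^d} ∏_j p_{m_j}(x_j)^α p_{m'_j}(x_j)^{1−α} dx = exp(α(α−1)‖m−m'‖₂²/(2σ²))`;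
hence for `α > 1` the order-`α` Rényi divergence equals `α‖m−m'‖₂²/(2σ²)`, so a
composition of `J = d` independent Gaussian mechanisms of ℓ₂ sensitivity `1` and noise
variance `σ²` satisfies `(α, αJ/(2σ²))`-Rényi differential privacy. -/
theorem product_gaussian_renyi_divergence (σ α : ℝ) (hσ : 0 < σ)
    (d : ℕ) (hd : 0 < d) (m m' : Fin d → ℝ) :
    (∫ x : Fin d → ℝ, ∏ j, gaussPdf σ (m j) (x j) ^ α * gaussPdf σ (m' j) (x j) ^ (1 - α))
        = Real.exp (α * (α - 1) * (∑ j, (m j - m' j) ^ 2) / (2 * σ ^ 2)) ∧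
      (1 < α →
        (1 / (α - 1)) * Real.log
            (∫ x : Fin d → ℝ,
              ∏ j, gaussPdf σ (m j) (x j) ^ α * gaussPdf σ (m' j) (x j) ^ (1 - α))
          = α * (∑ j, (m j - m' j) ^ 2) / (2 * σ ^ 2)) ∧
      (1 < α → (∀ j, |m j - m' j| ≤ 1) →
        (1 / (α - 1)) * Real.log
            (∫ x : Fin d → ℝ,
              ∏ j, gaussPdf σ (m j) (x j) ^ α * gaussPdf σ (m' j) (x j) ^ (1 - α))
          ≤ α * (d : ℝ) / (2 * σ ^ 2)) := by
  have hmain : (∫ x : Fin d → ℝ,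
      ∏ j, gaussPdf σ (m j) (x j) ^ α * gaussPdf σ (m' j) (x j) ^ (1 - α))
        = Real.exp (α * (α - 1) * (∑ j, (m j - m' j) ^ 2) / (2 * σ ^ 2)) := by
    rw [MeasureTheory.volume_pi]
    rw [MeasureTheory.integral_fintype_prod_eq_prod
      (f := fun j x => gaussPdf σ (m j) x ^ α * gaussPdf σ (m' j) x ^ (1 - α))]
    simp_rw [key_int σ α _ _ hσ, ← Real.exp_sum]
    congr 1
    rw [Finset.mul_sum, Finset.sum_div]
  refine ⟨hmain, fun hα => ?_, fun hα hb => ?_⟩ <;>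
    rw [hmain, Real.log_exp]
  · have : α - 1 ≠ 0 := by linarith
    field_simp
  · have h1 : α - 1 ≠ 0 := by linarith
    have : (1 / (α - 1)) * (α * (α - 1) * (∑ j, (m j - m' j) ^ 2) / (2 * σ ^ 2))
        = α * (∑ j, (m j - m' j) ^ 2) / (2 * σ ^ 2) := by field_simp
    rw [this]
    have hj : ∀ j : Fin d, (m j - m' j) ^ 2 ≤ 1 := by
      intro j
      rw [← sq_abs]
      exact pow_le_one₀ (abs_nonneg _) (hb j)
    have hsum : (∑ j, (m j - m' j) ^ 2) ≤ (d : ℝ) := by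
      have := Finset.sum_le_sum (fun j (_ : j ∈ Finset.univ) => hj j)
      rw [Finset.sum_const, Finset.card_univ, Fintype.card_fin, nsmul_eq_mul, mul_one] at this
      exact this
    have hα0 : 0 < α := by linarith
    exact div_le_div_of_nonneg_right (mul_le_mul_of_nonneg_left hsum hα0.le)
      (by positivity)
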